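/- Up to isomorphism of extensions (with arbitrary isomorphisms on the kernel and quotient), there are exactly three extensions of ℤ/2 by ℤ: (1) 1 → ℤ → ℤ × ℤ/2 → ℤ/2 → 1; (2) 1 → ℤ →×2 ℤ → ℤ/2 → 1; (3) 1 → ℤ → ℤ ⋊_{(-1)} ℤ/2 → ℤ/2 → 1. In particular, every group A fitting into a short exact sequence 1 → ℤ → A → ℤ/2 → 1 is isomorphic to ℤ × ℤ/2, ℤ, or ℤ ⋊_{(-1)} ℤ/2. -/

import Mathlib

/-- The negation automorphism of `ℤ` (written multiplicatively). -/
def negAut : MulAut (Multiplicative ℤ) := MulEquiv.inv (Multiplicative ℤ)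

/-- The action of `ℤ/2` on `ℤ` by negation. -/
def negAction : Multiplicative (ZMod 2) →* MulAut (Multiplicative ℤ) where
  toFun g := negAut ^ (Multiplicative.toAdd g).val
  map_one' := by
    show negAut ^ (0 : ZMod 2).val = 1
    simp [ZMod.val_zero]
  map_mul' a b := by
    have h2 : negAut ^ 2 = 1 := by
      ext x
      show x⁻¹⁻¹ = x
      simp
    show negAut ^ (Multiplicative.toAdd a + Multiplicative.toAdd b).val = _
    rw [ZMod.val_add, ← pow_eq_pow_mod _ h2, pow_add]

/-- The infinite dihedral group `ℤ ⋊ ℤ/2`. -/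
abbrev InfDihedral := Multiplicative ℤ ⋊[negAction] Multiplicative (ZMod 2)

/-- `A` is the middle term of a short exact sequence `1 → ℤ → A → ℤ/2 → 1`. -/
def IsExtensionOfZ2ByZ (A : Type) [Group A] : Prop :=
  ∃ (i : Multiplicative ℤ →* A) (d : A →* Multiplicative (ZMod 2)),
    Function.Injective i ∧ Function.Surjective d ∧ d.ker = i.range

lemma zmod2_cases : ∀ x : ZMod 2, x = 0 ∨ x = 1 := by decide

/-- hom from Z/2 determined by a square-one element -/
def z2Hom {A : Type} [Group A] (s : A) (hs : s ^ 2 = 1) : Multiplicative (ZMod 2) →* A where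
  toFun g := s ^ (Multiplicative.toAdd g).val
  map_one' := by show s ^ (0 : ZMod 2).val = 1; simp [ZMod.val_zero]
  map_mul' a b := by
    show s ^ (Multiplicative.toAdd a + Multiplicative.toAdd b).val = _
    rw [ZMod.val_add, ← pow_eq_pow_mod _ hs, pow_add]

lemma z2Hom_gen {A : Type} [Group A] (s : A) (hs : s ^ 2 = 1) :
    z2Hom s hs (Multiplicative.ofAdd 1) = s := by
  show s ^ (1 : ZMod 2).val = s
  norm_num [ZMod.val_one]

-- Part 1: product
lemma ext_prod : IsExtensionOfZ2ByZ (Multiplicative ℤ × Multiplicative (ZMod 2)) := by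
  refine ⟨MonoidHom.inl _ _, MonoidHom.snd _ _, fun a b h => congrArg Prod.fst h,
    fun g => ⟨(1, g), rfl⟩, ?_⟩
  ext ⟨x, y⟩
  simp [MonoidHom.mem_ker, MonoidHom.mem_range, Prod.ext_iff, eq_comm, Subgroup.mem_prod]

-- Part 2: Z
lemma ext_Z : IsExtensionOfZ2ByZ (Multiplicative ℤ) := by
  refine ⟨powMonoidHom 2, AddMonoidHom.toMultiplicative (Int.castAddHom (ZMod 2)), ?_, ?_, ?_⟩
  · intro a b h
    have : (2:ℕ) • Multiplicative.toAdd a = (2:ℕ) • Multiplicative.toAdd b := by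
      rw [← toAdd_pow, ← toAdd_pow]; exact congrArg Multiplicative.toAdd h
    simp only [nsmul_eq_mul, Nat.cast_ofNat] at this
    exact Multiplicative.toAdd.injective (by omega)
  · intro g
    refine ⟨Multiplicative.ofAdd ((Multiplicative.toAdd g).val : ℤ), ?_⟩
    show Multiplicative.ofAdd (((Multiplicative.toAdd g).val : ℤ) : ZMod 2) = g
    push_cast
    rw [ZMod.natCast_val, ZMod.cast_id, ofAdd_toAdd]
  · ext a
    simp only [MonoidHom.mem_ker, MonoidHom.mem_range]
    constructor
    · intro h
      have h' : ((Multiplicative.toAdd a : ℤ) : ZMod 2) = 0 := by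
        have := congrArg Multiplicative.toAdd h
        exact this
      obtain ⟨q, hq⟩ := (ZMod.intCast_zmod_eq_zero_iff_dvd _ 2).mp h'
      refine ⟨Multiplicative.ofAdd q, ?_⟩
      apply Multiplicative.toAdd.injective
      rw [powMonoidHom_apply, toAdd_pow, toAdd_ofAdd]
      simp only [nsmul_eq_mul, Nat.cast_ofNat]
      omega
    · rintro ⟨b, rfl⟩
      show Multiplicative.ofAdd ((Multiplicative.toAdd ((powMonoidHom 2) b) : ℤ) : ZMod 2) = 1
      rw [powMonoidHom_apply]
      rw [toAdd_pow]
      have : ((2 • Multiplicative.toAdd b : ℤ) : ZMod 2) = 0 := by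
        push_cast [nsmul_eq_mul]
        rw [show (2:ZMod 2) = 0 from rfl, zero_mul]
      rw [this]
      rfl

-- Part 3
lemma ext_D : IsExtensionOfZ2ByZ InfDihedral :=
  ⟨SemidirectProduct.inl, SemidirectProduct.rightHom, SemidirectProduct.inl_injective,
    SemidirectProduct.rightHom_surjective, SemidirectProduct.range_inl_eq_ker_rightHom.symm⟩

-- non-commutativity of InfDihedral
lemma D_ne : (SemidirectProduct.inl (Multiplicative.ofAdd (1:ℤ)) : InfDihedral) *
    SemidirectProduct.inr (Multiplicative.ofAdd (1:ZMod 2)) ≠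
    SemidirectProduct.inr (Multiplicative.ofAdd (1:ZMod 2)) *
    SemidirectProduct.inl (Multiplicative.ofAdd (1:ℤ)) := by
  intro h
  have h' := congrArg SemidirectProduct.left h
  simp only [SemidirectProduct.mul_left, SemidirectProduct.left_inl,
    SemidirectProduct.right_inl, SemidirectProduct.left_inr, SemidirectProduct.right_inr,
    map_one, MulAut.one_apply, mul_one, one_mul] at h'
  have h2 : (negAction (Multiplicative.ofAdd (1:ZMod 2))) (Multiplicative.ofAdd (1:ℤ)) =
      Multiplicative.ofAdd (-1 : ℤ) := by
    show (negAut ^ (Multiplicative.toAdd (Multiplicative.ofAdd (1:ZMod 2))).val) _ = _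
    norm_num [ZMod.val_one]
    rfl
  rw [h2] at h'
  have := congrArg Multiplicative.toAdd h'
  simp at this

lemma comm_transfer {G H : Type} [CommGroup G] [Group H] (e : G ≃* H) (a b : H) :
    a * b = b * a := by
  calc a * b = e (e.symm a * e.symm b) := by
        rw [map_mul, e.apply_symm_apply, e.apply_symm_apply]
    _ = e (e.symm b * e.symm a) := by rw [mul_comm]
    _ = b * a := by rw [map_mul, e.apply_symm_apply, e.apply_symm_apply]

lemma not_prod_Z : ¬ Nonempty (Multiplicative ℤ × Multiplicative (ZMod 2) ≃* Multiplicative ℤ) := by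
  rintro ⟨e⟩
  set x : Multiplicative ℤ × Multiplicative (ZMod 2) := (1, Multiplicative.ofAdd 1) with hx
  have hx2 : x * x = 1 := by
    rw [hx, Prod.mk_mul_mk, one_mul, ← ofAdd_add]
    norm_num
    rfl
  have he : e x * e x = 1 := by rw [← map_mul, hx2, map_one]
  have h0 : Multiplicative.toAdd (e x) + Multiplicative.toAdd (e x) = 0 := by
    have := congrArg Multiplicative.toAdd he
    simpa using this
  have : e x = 1 := by
    apply Multiplicative.toAdd.injective
    simp only [toAdd_one]
    omega
  have hx1 : x = 1 := by
    have := e.injective (this.trans (map_one e).symm)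
    exact this
  exact absurd (congrArg Prod.snd hx1) (by decide)

lemma classify (A : Type) [Group A] (h : IsExtensionOfZ2ByZ A) :
    Nonempty (A ≃* Multiplicative ℤ × Multiplicative (ZMod 2)) ∨
    Nonempty (A ≃* Multiplicative ℤ) ∨ Nonempty (A ≃* InfDihedral) := by
  obtain ⟨i, d, hi, hd, hker⟩ := h
  have hmem : ∀ a : A, d a = 1 → ∃ x, i x = a := by
    intro a ha
    have h2 : a ∈ d.ker := ha
    rw [hker] at h2
    exact h2
  have hdi : ∀ x, d (i x) = 1 := by
    intro x
    have h2 : i x ∈ i.range := ⟨x, rfl⟩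
    rw [← hker] at h2
    exact h2
  obtain ⟨t, ht⟩ := hd (Multiplicative.ofAdd 1)
  have hgen : ∀ a : A, (∃ x, i x = a) ∨ (∃ x, i x * t = a) := by
    intro a
    rcases zmod2_cases (Multiplicative.toAdd (d a)) with h0 | h1
    · exact Or.inl (hmem a (Multiplicative.toAdd.injective h0))
    · right
      have hda : d (a * t⁻¹) = 1 := by
        rw [map_mul, map_inv, ht]
        apply Multiplicative.toAdd.injective
        rw [toAdd_mul, toAdd_inv, toAdd_ofAdd, h1, toAdd_one]
        decide
      obtain ⟨x, hx⟩ := hmem _ hda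
      exact ⟨x, by rw [hx, inv_mul_cancel_right]⟩
  -- conjugation
  obtain ⟨u, hu⟩ : ∃ u, i u = t * i (Multiplicative.ofAdd 1) * t⁻¹ := by
    apply hmem
    simp [hdi, ht]
  have hconj : ∀ n : ℤ, t * i (Multiplicative.ofAdd n) * t⁻¹ = i (u ^ n) := by
    intro n
    have h1 : (Multiplicative.ofAdd n) = (Multiplicative.ofAdd (1:ℤ)) ^ n := by
      apply Multiplicative.toAdd.injective
      simp [toAdd_zpow]
    calc t * i (Multiplicative.ofAdd n) * t⁻¹
        = MulAut.conj t ((i (Multiplicative.ofAdd (1:ℤ))) ^ n) := by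
          rw [h1, map_zpow, MulAut.conj_apply]
      _ = (MulAut.conj t (i (Multiplicative.ofAdd (1:ℤ)))) ^ n := map_zpow _ _ _
      _ = i (u ^ n) := by rw [MulAut.conj_apply, ← hu, map_zpow]
  obtain ⟨v, hv⟩ : ∃ v, i v = t⁻¹ * i (Multiplicative.ofAdd 1) * t := by
    apply hmem
    simp [hdi, ht]
  have hvu : i (Multiplicative.ofAdd (1:ℤ)) = i (u ^ (Multiplicative.toAdd v)) := by
    have h2 := hconj (Multiplicative.toAdd v)
    rw [ofAdd_toAdd] at h2
    rw [← h2, hv]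
    group
  have hk : Multiplicative.toAdd u = 1 ∨ Multiplicative.toAdd u = -1 := by
    have h1 := hi hvu
    have h2 := congrArg Multiplicative.toAdd h1
    rw [toAdd_zpow, toAdd_ofAdd, smul_eq_mul] at h2
    exact Int.isUnit_iff.mp
      (IsUnit.of_mul_eq_one _ (by rw [mul_comm]; exact h2.symm))
  obtain ⟨w, hw⟩ : ∃ w, i w = t * t := by
    apply hmem
    rw [map_mul, ht, ← ofAdd_add]
    decide
  have hicomm : ∀ x y : Multiplicative ℤ, i x * i y = i y * i x := by
    intro x y
    rw [← map_mul, ← map_mul, mul_comm]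
  rcases hk with hk1 | hk2
  · -- abelian cases
    have hu1 : u = Multiplicative.ofAdd (1:ℤ) := Multiplicative.toAdd.injective (by rw [hk1]; rfl)
    have hcomm : ∀ x, t * i x = i x * t := by
      intro x
      have h2 := hconj (Multiplicative.toAdd x)
      rw [ofAdd_toAdd, hu1] at h2
      have h3 : (Multiplicative.ofAdd (1:ℤ)) ^ (Multiplicative.toAdd x) = x := by
        apply Multiplicative.toAdd.injective
        simp [toAdd_zpow]
      rw [h3] at h2
      calc t * i x = (t * i x * t⁻¹) * t := by group
        _ = i x * t := by rw [h2]
    rcases Int.even_or_odd (Multiplicative.toAdd w) with ⟨r, hr⟩ | ⟨r, hr⟩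
    · -- even: A ≅ Z × Z/2
      set s := i (Multiplicative.ofAdd (-r)) * t with hs
      have hss : s * s = 1 := by
        rw [hs]
        calc (i (Multiplicative.ofAdd (-r)) * t) * (i (Multiplicative.ofAdd (-r)) * t)
            = i (Multiplicative.ofAdd (-r)) * (t * i (Multiplicative.ofAdd (-r))) * t := by group
          _ = i (Multiplicative.ofAdd (-r)) * (i (Multiplicative.ofAdd (-r)) * t) * t := by
              rw [hcomm]
          _ = (i (Multiplicative.ofAdd (-r)) * i (Multiplicative.ofAdd (-r))) * (t * t) := by group
          _ = i (Multiplicative.ofAdd (-r) * (Multiplicative.ofAdd (-r) * w)) := by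
              rw [← hw, ← map_mul, ← map_mul, mul_assoc]
          _ = i 1 := by
              congr 1
              apply Multiplicative.toAdd.injective
              simp only [toAdd_mul, toAdd_ofAdd, toAdd_one, hr]
              omega
          _ = 1 := map_one i
      have hs2 : s ^ 2 = 1 := by rw [pow_two, hss]
      have hcs : ∀ x, Commute (i x) s := by
        intro x
        show i x * s = s * i x
        rw [hs]
        calc i x * (i (Multiplicative.ofAdd (-r)) * t)
            = (i x * i (Multiplicative.ofAdd (-r))) * t := by group
          _ = (i (Multiplicative.ofAdd (-r)) * i x) * t := by rw [hicomm]
          _ = i (Multiplicative.ofAdd (-r)) * (i x * t) := by group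
          _ = i (Multiplicative.ofAdd (-r)) * (t * i x) := by rw [hcomm]
          _ = (i (Multiplicative.ofAdd (-r)) * t) * i x := by group
      set ψ := MonoidHom.noncommCoprod i (z2Hom s hs2)
        (fun m n => by
          show Commute (i m) (s ^ (Multiplicative.toAdd n).val)
          exact (hcs m).pow_right _) with hψ
      have hd_s : d s = Multiplicative.ofAdd (1 : ZMod 2) := by
        rw [hs, map_mul, hdi, ht, one_mul]
      have hinj : Function.Injective ψ := by
        rw [injective_iff_map_eq_one]
        rintro ⟨x, g⟩ hxg
        rw [hψ, MonoidHom.noncommCoprod_apply] at hxg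
        have hdg : d (i x * (z2Hom s hs2) g) =
            Multiplicative.ofAdd (((Multiplicative.toAdd g).val : ℕ) : ZMod 2) := by
          rw [map_mul, hdi, one_mul]
          show d (s ^ (Multiplicative.toAdd g).val) = _
          rw [map_pow, hd_s, ← ofAdd_nsmul]
          congr 1
          simp [nsmul_eq_mul]
        rw [hxg, map_one] at hdg
        have hg1 : g = 1 := by
          apply Multiplicative.toAdd.injective
          have h4 := congrArg Multiplicative.toAdd hdg.symm
          rw [toAdd_ofAdd, toAdd_one] at h4
          rwa [ZMod.natCast_val, ZMod.cast_id] at h4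
        subst hg1
        rw [map_one, mul_one] at hxg
        have hx1 : x = 1 := hi (by rw [hxg, map_one])
        rw [hx1]
        rfl
      have hsurj : Function.Surjective ψ := by
        intro a
        rcases hgen a with ⟨x, hx⟩ | ⟨x, hx⟩
        · exact ⟨(x, 1), by rw [hψ, MonoidHom.noncommCoprod_apply, map_one, mul_one, hx]⟩
        · refine ⟨(x * Multiplicative.ofAdd (r:ℤ), Multiplicative.ofAdd 1), ?_⟩
          rw [hψ, MonoidHom.noncommCoprod_apply, z2Hom_gen, map_mul, hs, ← hx]
          calc i x * i (Multiplicative.ofAdd (r:ℤ)) * (i (Multiplicative.ofAdd (-r)) * t)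
              = i x * (i (Multiplicative.ofAdd (r:ℤ)) * i (Multiplicative.ofAdd (-r))) * t := by
                group
            _ = i x * i (Multiplicative.ofAdd (r:ℤ) * Multiplicative.ofAdd (-r)) * t := by
                rw [map_mul]
            _ = i x * i 1 * t := by
                congr 2
                apply Multiplicative.toAdd.injective
                simp
            _ = i x * t := by rw [map_one, mul_one]
      exact Or.inl ⟨(MulEquiv.ofBijective ψ ⟨hinj, hsurj⟩).symm⟩
    · -- odd: A ≅ Z
      set s := i (Multiplicative.ofAdd (-r)) * t with hs
      have hss : s * s = i (Multiplicative.ofAdd (1:ℤ)) := by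
        rw [hs]
        calc (i (Multiplicative.ofAdd (-r)) * t) * (i (Multiplicative.ofAdd (-r)) * t)
            = i (Multiplicative.ofAdd (-r)) * (t * i (Multiplicative.ofAdd (-r))) * t := by group
          _ = i (Multiplicative.ofAdd (-r)) * (i (Multiplicative.ofAdd (-r)) * t) * t := by
              rw [hcomm]
          _ = (i (Multiplicative.ofAdd (-r)) * i (Multiplicative.ofAdd (-r))) * (t * t) := by group
          _ = i (Multiplicative.ofAdd (-r) * (Multiplicative.ofAdd (-r) * w)) := by
              rw [← hw, ← map_mul, ← map_mul, mul_assoc]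
          _ = i (Multiplicative.ofAdd (1:ℤ)) := by
              congr 1
              apply Multiplicative.toAdd.injective
              simp only [toAdd_mul, toAdd_ofAdd, hr]
              omega
      have hd_s : d s = Multiplicative.ofAdd (1 : ZMod 2) := by
        rw [hs, map_mul, hdi, ht, one_mul]
      have hpow : ∀ n : ℤ, s ^ (2 * n) = i (Multiplicative.ofAdd n) := by
        intro n
        rw [zpow_mul]
        have h2 : s ^ (2:ℤ) = i (Multiplicative.ofAdd (1:ℤ)) := by rw [zpow_two, hss]
        rw [h2, ← map_zpow]
        congr 1
        apply Multiplicative.toAdd.injective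
        simp [toAdd_zpow]
      have hinj : Function.Injective (zpowersHom A s) := by
        rw [injective_iff_map_eq_one]
        intro x hx
        rw [zpowersHom_apply] at hx
        have hdx : ((Multiplicative.toAdd x : ℤ) : ZMod 2) = 0 := by
          have h2 := congrArg d hx
          rw [map_zpow, hd_s, d.map_one] at h2
          have h3 := congrArg Multiplicative.toAdd h2
          rw [toAdd_zpow, toAdd_ofAdd, toAdd_one, zsmul_eq_mul, mul_one] at h3
          exact h3
        obtain ⟨q, hq⟩ := (ZMod.intCast_zmod_eq_zero_iff_dvd _ 2).mp hdx
        rw [hq] at hx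
        push_cast at hx
        rw [hpow] at hx
        have hq1 : Multiplicative.ofAdd q = 1 := hi (by rw [hx, map_one])
        apply Multiplicative.toAdd.injective
        rw [toAdd_one]
        have := congrArg Multiplicative.toAdd hq1
        rw [toAdd_ofAdd, toAdd_one] at this
        omega
      have hsurj : Function.Surjective (zpowersHom A s) := by
        intro a
        rcases hgen a with ⟨x, hx⟩ | ⟨x, hx⟩
        · exact ⟨Multiplicative.ofAdd (2 * Multiplicative.toAdd x),
            by rw [zpowersHom_apply, toAdd_ofAdd, hpow, ofAdd_toAdd, hx]⟩
        · refine ⟨Multiplicative.ofAdd (2 * (Multiplicative.toAdd x + r) + 1), ?_⟩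
          rw [zpowersHom_apply, toAdd_ofAdd, zpow_add, zpow_one, hpow, hs, ← hx]
          calc i (Multiplicative.ofAdd (Multiplicative.toAdd x + r)) *
                (i (Multiplicative.ofAdd (-r)) * t)
              = (i (Multiplicative.ofAdd (Multiplicative.toAdd x + r)) *
                i (Multiplicative.ofAdd (-r))) * t := by group
            _ = i (Multiplicative.ofAdd (Multiplicative.toAdd x + r) *
                Multiplicative.ofAdd (-r)) * t := by rw [map_mul]
            _ = i x * t := by
                congr 2
                apply Multiplicative.toAdd.injective
                simp
      exact Or.inr (Or.inl ⟨(MulEquiv.ofBijective (zpowersHom A s) ⟨hinj, hsurj⟩).symm⟩)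
  · -- dihedral case
    have hu1 : u = Multiplicative.ofAdd (-1:ℤ) := Multiplicative.toAdd.injective (by rw [hk2]; rfl)
    have hcj : ∀ x, t * i x * t⁻¹ = i x⁻¹ := by
      intro x
      have h2 := hconj (Multiplicative.toAdd x)
      rw [ofAdd_toAdd, hu1] at h2
      rw [h2]
      congr 1
      apply Multiplicative.toAdd.injective
      rw [toAdd_zpow, toAdd_ofAdd, toAdd_inv, smul_eq_mul]
      omega
    have ht2 : t ^ 2 = 1 := by
      have h1 : t * (t * t) * t⁻¹ = t * t := by group
      rw [← hw, hcj] at h1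
      have h2 := hi h1
      have h3 := congrArg Multiplicative.toAdd h2
      rw [toAdd_inv] at h3
      have hw0 : w = 1 := by
        apply Multiplicative.toAdd.injective
        rw [toAdd_one]
        omega
      rw [pow_two, ← hw, hw0, map_one]
    have hlift : ∀ g, i.comp (MulEquiv.toMonoidHom (negAction g)) =
        (MulEquiv.toMonoidHom (MulAut.conj (z2Hom t ht2 g))).comp i := by
      intro g
      apply MonoidHom.ext
      intro x
      show i ((negAut ^ (Multiplicative.toAdd g).val) x) = MulAut.conj (z2Hom t ht2 g) (i x)
      rcases zmod2_cases (Multiplicative.toAdd g) with h0 | h1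
      · have hval : (Multiplicative.toAdd g).val = 0 := by rw [h0]; rfl
        have hf : z2Hom t ht2 g = 1 := by
          show t ^ (Multiplicative.toAdd g).val = 1
          rw [hval, pow_zero]
        rw [hval, pow_zero, hf]
        simp
      · have hval : (Multiplicative.toAdd g).val = 1 := by rw [h1]; decide
        rw [hval, pow_one]
        have hf : z2Hom t ht2 g = t := by
          show t ^ (Multiplicative.toAdd g).val = t
          rw [hval, pow_one]
        rw [hf, MulAut.conj_apply, hcj]
        rfl
    set ψ := SemidirectProduct.lift i (z2Hom t ht2) hlift with hψ
    have hψ_apply : ∀ p : InfDihedral, ψ p = i p.left * (z2Hom t ht2) p.right := by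
      intro p
      conv_lhs => rw [← SemidirectProduct.inl_left_mul_inr_right p]
      rw [map_mul, hψ, SemidirectProduct.lift_inl, SemidirectProduct.lift_inr]
    have hinj : Function.Injective ψ := by
      rw [injective_iff_map_eq_one]
      intro p hp
      rw [hψ_apply] at hp
      have hdp : d (i p.left * (z2Hom t ht2) p.right) =
          Multiplicative.ofAdd (((Multiplicative.toAdd p.right).val : ℕ) : ZMod 2) := by
        rw [map_mul, hdi, one_mul]
        show d (t ^ (Multiplicative.toAdd p.right).val) = _
        rw [map_pow, ht, ← ofAdd_nsmul]
        congr 1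
        simp [nsmul_eq_mul]
      rw [hp, map_one] at hdp
      have hr1 : p.right = 1 := by
        apply Multiplicative.toAdd.injective
        have h4 := congrArg Multiplicative.toAdd hdp.symm
        rw [toAdd_ofAdd, toAdd_one] at h4
        rwa [ZMod.natCast_val, ZMod.cast_id] at h4
      rw [hr1, map_one, mul_one] at hp
      have hl1 : p.left = 1 := hi (by rw [hp, map_one])
      apply SemidirectProduct.ext
      · rw [hl1]; rfl
      · rw [hr1]; rfl
    have hsurj : Function.Surjective ψ := by
      intro a
      rcases hgen a with ⟨x, hx⟩ | ⟨x, hx⟩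
      · exact ⟨SemidirectProduct.inl x, by rw [hψ, SemidirectProduct.lift_inl, hx]⟩
      · refine ⟨SemidirectProduct.inl x * SemidirectProduct.inr (Multiplicative.ofAdd 1), ?_⟩
        rw [map_mul, hψ, SemidirectProduct.lift_inl, SemidirectProduct.lift_inr,
          z2Hom_gen, hx]
    exact Or.inr (Or.inr ⟨(MulEquiv.ofBijective ψ ⟨hinj, hsurj⟩).symm⟩)


/-- Up to isomorphism there are exactly three extensions of
`ℤ/2` by `ℤ`: each of `ℤ × ℤ/2`, `ℤ` and `ℤ ⋊₋₁ ℤ/2` occurs as the middle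
group of such an extension, every middle group is isomorphic to one of these
three, and the three are pairwise non-isomorphic. -/
theorem extensions_of_Z2_by_Z_classification :
    IsExtensionOfZ2ByZ (Multiplicative ℤ × Multiplicative (ZMod 2)) ∧
    IsExtensionOfZ2ByZ (Multiplicative ℤ) ∧
    IsExtensionOfZ2ByZ InfDihedral ∧
    (∀ (A : Type) [Group A], IsExtensionOfZ2ByZ A →
      Nonempty (A ≃* Multiplicative ℤ × Multiplicative (ZMod 2)) ∨
      Nonempty (A ≃* Multiplicative ℤ) ∨
      Nonempty (A ≃* InfDihedral)) ∧
    ¬ Nonempty (Multiplicative ℤ × Multiplicative (ZMod 2) ≃* Multiplicative ℤ) ∧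
    ¬ Nonempty (Multiplicative ℤ × Multiplicative (ZMod 2) ≃* InfDihedral) ∧
    ¬ Nonempty (Multiplicative ℤ ≃* InfDihedral) := by
  refine ⟨ext_prod, ext_Z, ext_D, fun A _ h => classify A h, not_prod_Z, ?_, ?_⟩
  · rintro ⟨e⟩
    exact D_ne (comm_transfer e _ _)
  · rintro ⟨e⟩
    exact D_ne (comm_transfer e _ _)
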